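/- Let p* ∈ C for a nonempty closed convex set C ⊆ ℝ^K, and consider the deterministic skewed gradient projection update p^{n+1}_k = [p^n + β^n (ν − M p^n)]_C (componentwise ν_k − μ_k p^n_k with all μ_k > 0), where p*_k = ν_k/μ_k, and (β^n) is positive with β^n → 0 and Σβ^n = ∞. Then p^n → p* as n → ∞. -/

import Mathlib

open Filter

theorem stmt_5 {K : ℕ} (hK : 0 < K)
    (C : Set (EuclideanSpace ℝ (Fin K)))
    (hne : C.Nonempty) (hclosed : IsClosed C) (hconv : Convex ℝ C)
    (ν μv : Fin K → ℝ) (hμ : ∀ k, 0 < μv k)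
    (pstar : EuclideanSpace ℝ (Fin K)) (hpstar : ∀ k, pstar k = ν k / μv k)
    (hpstarC : pstar ∈ C)
    (β : ℕ → ℝ) (hβpos : ∀ n, 0 < β n) (hβ0 : Tendsto β atTop (nhds 0))
    (hβdiv : Tendsto (fun n => ∑ k ∈ Finset.range n, β k) atTop atTop)
    (p g : ℕ → EuclideanSpace ℝ (Fin K)) (hp0 : p 0 ∈ C)
    (hg : ∀ n k, g n k = p n k + β n * (ν k - μv k * p n k))
    (hupd : ∀ n, p (n + 1) ∈ C ∧ ∀ z ∈ C, dist (g n) (p (n + 1)) ≤ dist (g n) z) :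
    Tendsto p atTop (nhds pstar) := by
  classical
  obtain ⟨k0, -, hk0⟩ := Finset.exists_min_image Finset.univ μv ⟨⟨0, hK⟩, Finset.mem_univ _⟩
  obtain ⟨k1, -, hk1⟩ := Finset.exists_max_image Finset.univ μv ⟨⟨0, hK⟩, Finset.mem_univ _⟩
  set c := μv k0 with hc
  set B := μv k1 with hB
  have hcpos : 0 < c := hμ k0
  have hBpos : 0 < B := hμ k1
  have hcle : ∀ k, c ≤ μv k := fun k => hk0 k (Finset.mem_univ k)
  have hBle : ∀ k, μv k ≤ B := fun k => hk1 k (Finset.mem_univ k)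
  have hν : ∀ k, ν k = μv k * pstar k := by
    intro k
    have h := (hμ k).ne'
    rw [hpstar k]
    field_simp
  have hsub : ∀ (x y : EuclideanSpace ℝ (Fin K)) k, (x - y) k = x k - y k := fun _ _ _ => rfl
  have hcomp : ∀ n k, (g n - pstar) k = (1 - β n * μv k) * ((p n - pstar) k) := by
    intro n k
    rw [hsub, hsub, hg n k, hν k]
    ring
  -- projection contraction
  haveI : Nonempty ↑C := hne.to_subtype
  have hproj : ∀ n, ‖p (n + 1) - pstar‖ ≤ ‖g n - pstar‖ := by
    intro n
    obtain ⟨hqC, hmin⟩ := hupd n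
    set q := p (n + 1) with hq
    have hinf : ‖g n - q‖ = ⨅ w : C, ‖g n - (w : EuclideanSpace ℝ (Fin K))‖ := by
      apply le_antisymm
      · exact le_ciInf fun w => by simpa [dist_eq_norm] using hmin w w.2
      · exact ciInf_le ⟨0, by rintro x ⟨w, rfl⟩; exact norm_nonneg _⟩ (⟨q, hqC⟩ : C)
    have hinner := (norm_eq_iInf_iff_real_inner_le_zero hconv hqC).mp hinf pstar hpstarC
    have h2 : (inner ℝ (q - g n) (q - pstar) : ℝ) ≤ 0 := by
      have he : (inner ℝ (q - g n) (q - pstar) : ℝ) = inner ℝ (g n - q) (pstar - q) := by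
        rw [show q - g n = -(g n - q) by abel, show q - pstar = -(pstar - q) by abel,
          inner_neg_neg]
      rw [he]; exact hinner
    have hsq : ‖q - pstar‖ ^ 2 ≤ ‖g n - pstar‖ * ‖q - pstar‖ := by
      have he : (inner ℝ (q - pstar) (q - pstar) : ℝ)
          = inner ℝ (q - g n) (q - pstar) + inner ℝ (g n - pstar) (q - pstar) := by
        rw [← inner_add_left]; congr 1; abel
      have h3 : (inner ℝ (g n - pstar) (q - pstar) : ℝ) ≤ ‖g n - pstar‖ * ‖q - pstar‖ :=
        real_inner_le_norm _ _
      have h4 : (inner ℝ (q - pstar) (q - pstar) : ℝ) = ‖q - pstar‖ ^ 2 := by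
        rw [real_inner_self_eq_norm_sq]
      linarith
    rcases eq_or_lt_of_le (norm_nonneg (q - pstar)) with h | h
    · rw [← h]; exact norm_nonneg _
    · have := (mul_le_mul_iff_of_pos_right h).mp (by nlinarith : ‖q - pstar‖ * ‖q - pstar‖ ≤ ‖g n - pstar‖ * ‖q - pstar‖)
      exact this
  -- component norm bound when stepsize small
  have hnormg : ∀ n, (∀ k, β n * μv k ≤ 1) →
      ‖g n - pstar‖ ≤ (1 - β n * c) * ‖p n - pstar‖ := by
    intro n hsmall
    have h0 : 0 ≤ 1 - β n * c := by linarith [hsmall k0]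
    rw [EuclideanSpace.norm_eq, EuclideanSpace.norm_eq]
    have hterm : ∀ k : Fin K, ‖(g n - pstar) k‖ ^ 2
        ≤ (1 - β n * c) ^ 2 * ‖(p n - pstar) k‖ ^ 2 := by
      intro k
      rw [hcomp n k]
      have hb : 0 ≤ 1 - β n * μv k := by linarith [hsmall k]
      have hbc : 1 - β n * μv k ≤ 1 - β n * c := by
        have := hcle k
        nlinarith [(hβpos n).le]
      have : (1 - β n * μv k) ^ 2 ≤ (1 - β n * c) ^ 2 := by nlinarith
      rw [Real.norm_eq_abs, Real.norm_eq_abs, sq_abs, sq_abs, mul_pow]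
      nlinarith [sq_nonneg ((p n - pstar) k)]
    have hsum : ∑ k : Fin K, ‖(g n - pstar) k‖ ^ 2
        ≤ (1 - β n * c) ^ 2 * ∑ k : Fin K, ‖(p n - pstar) k‖ ^ 2 := by
      rw [Finset.mul_sum]
      exact Finset.sum_le_sum fun k _ => hterm k
    calc Real.sqrt (∑ k : Fin K, ‖(g n - pstar) k‖ ^ 2)
        ≤ Real.sqrt ((1 - β n * c) ^ 2 * ∑ k : Fin K, ‖(p n - pstar) k‖ ^ 2) :=
          Real.sqrt_le_sqrt hsum
      _ = (1 - β n * c) * Real.sqrt (∑ k : Fin K, ‖(p n - pstar) k‖ ^ 2) := by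
          rw [Real.sqrt_mul (sq_nonneg _), Real.sqrt_sq h0]
  -- choose N with β n * B ≤ 1 for n ≥ N
  have hev : ∀ᶠ n in atTop, β n < 1 / B := by
    have : ∀ᶠ x in nhds (0 : ℝ), x < 1 / B :=
      eventually_lt_nhds (by positivity)
    exact hβ0.eventually this
  obtain ⟨N, hN⟩ := eventually_atTop.mp hev
  have hsmall : ∀ n, N ≤ n → ∀ k, β n * μv k ≤ 1 := by
    intro n hn k
    have h1 : β n * μv k ≤ β n * B :=
      mul_le_mul_of_nonneg_left (hBle k) (hβpos n).le
    have h2 : β n * B < (1 / B) * B :=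
      mul_lt_mul_of_pos_right (hN n hn) hBpos
    have : (1 / B) * B = 1 := by field_simp
    linarith
  -- the key recursion
  have hrec : ∀ m, ‖p (N + m) - pstar‖
      ≤ ‖p N - pstar‖ * Real.exp (-(c * ∑ j ∈ Finset.range m, β (N + j))) := by
    intro m
    induction m with
    | zero => simp
    | succ m ih =>
      have harg : N + (m + 1) = (N + m) + 1 := by omega
      have h1 : ‖p (N + (m + 1)) - pstar‖ ≤ (1 - β (N + m) * c) * ‖p (N + m) - pstar‖ := by
        rw [harg]
        exact (hproj (N + m)).trans (hnormg (N + m) (hsmall (N + m) (Nat.le_add_right N m)))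
      have h0 : 0 ≤ 1 - β (N + m) * c := by
        linarith [hsmall (N + m) (Nat.le_add_right N m) k0]
      have h2 : (1 - β (N + m) * c) ≤ Real.exp (-(β (N + m) * c)) := by
        linarith [Real.add_one_le_exp (-(β (N + m) * c))]
      have h3 : (1 - β (N + m) * c) * ‖p (N + m) - pstar‖
          ≤ Real.exp (-(β (N + m) * c)) *
            (‖p N - pstar‖ * Real.exp (-(c * ∑ j ∈ Finset.range m, β (N + j)))) :=
        mul_le_mul h2 ih (norm_nonneg _) (Real.exp_pos _).le
      have h4 : Real.exp (-(β (N + m) * c)) *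
            (‖p N - pstar‖ * Real.exp (-(c * ∑ j ∈ Finset.range m, β (N + j))))
          = ‖p N - pstar‖ * Real.exp (-(c * ∑ j ∈ Finset.range (m + 1), β (N + j))) := by
        rw [Finset.sum_range_succ, show -(c * ((∑ j ∈ Finset.range m, β (N + j)) + β (N + m)))
          = (-(β (N + m) * c)) + (-(c * ∑ j ∈ Finset.range m, β (N + j))) by ring,
          Real.exp_add]
        ring
      linarith
  -- divergence of the shifted sums
  have hS : Tendsto (fun m => ∑ j ∈ Finset.range m, β (N + j)) atTop atTop := by
    have hshift : Tendsto (fun m : ℕ => m + N) atTop atTop := tendsto_add_atTop_nat N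
    have h1 : Tendsto (fun m => ∑ k ∈ Finset.range (m + N), β k) atTop atTop :=
      hβdiv.comp hshift
    have h2 : Tendsto (fun m => (∑ k ∈ Finset.range (m + N), β k)
        + -(∑ k ∈ Finset.range N, β k)) atTop atTop :=
      tendsto_atTop_add_const_right _ _ h1
    refine h2.congr fun m => ?_
    rw [add_comm m N, Finset.sum_range_add]
    ring
  have hexp : Tendsto (fun m => Real.exp (-(c * ∑ j ∈ Finset.range m, β (N + j))))
      atTop (nhds 0) := by
    have h1 : Tendsto (fun m => c * ∑ j ∈ Finset.range m, β (N + j)) atTop atTop :=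
      hS.const_mul_atTop hcpos
    have h2 : Tendsto (fun m => -(c * ∑ j ∈ Finset.range m, β (N + j))) atTop atBot :=
      tendsto_neg_atTop_atBot.comp h1
    exact Real.tendsto_exp_atBot.comp h2
  have hbound : Tendsto (fun m => ‖p N - pstar‖ *
      Real.exp (-(c * ∑ j ∈ Finset.range m, β (N + j)))) atTop (nhds 0) := by
    simpa using hexp.const_mul ‖p N - pstar‖
  have hmain : Tendsto (fun m => ‖p (N + m) - pstar‖) atTop (nhds 0) :=
    squeeze_zero (fun m => norm_nonneg _) hrec hbound
  have hmain' : Tendsto (fun m => ‖p (m + N) - pstar‖) atTop (nhds 0) := by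
    simpa [add_comm] using hmain
  have hfull : Tendsto (fun n => ‖p n - pstar‖) atTop (nhds 0) :=
    (tendsto_add_atTop_iff_nat N).mp hmain'
  rw [tendsto_iff_dist_tendsto_zero]
  simpa [dist_eq_norm] using hfull
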